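/- Let m_iso(θ₁) = 4 f(θ₁) + 4 f(π/2 − θ₁) for θ₁ ∈ (0, π/2), where f(θ) = (θ/π) log(2 sin θ) + Λ(θ)/π. Then m_iso has a critical point at θ₁ = π/4 with second derivative 8/π − 4 < 0 there, so θ₁ = π/4 is a strict local maximum. -/

import Mathlib

open Real Set MeasureTheory Filter Topology

/-- The Lobachevsky function `Λ(x) = −∫₀ˣ log(2 sin t) dt`. -/
noncomputable def lobachevsky (x : ℝ) : ℝ :=
  -∫ t in (0:ℝ)..x, Real.log (2 * Real.sin t)

/-- `f(θ) = (θ/π) log(2 sin θ) + Λ(θ)/π`. -/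
noncomputable def edgeContribution (θ : ℝ) : ℝ :=
  θ / Real.pi * Real.log (2 * Real.sin θ) + lobachevsky θ / Real.pi

/-- The isoradial Mahler measure of the `F₀` dimer with rhombus angles
`θ₁` and `π/2 − θ₁`: `m_iso(θ₁) = 4 f(θ₁) + 4 f(π/2 − θ₁)`. -/
noncomputable def mIsoF0 (θ₁ : ℝ) : ℝ :=
  4 * edgeContribution θ₁ + 4 * edgeContribution (Real.pi / 2 - θ₁)

/-- Continuity of the integrand on `(0, π)`. -/
lemma logSin_continuousOn : ContinuousOn (fun t => Real.log (2 * Real.sin t)) (Ioo 0 Real.pi) := by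
  apply ContinuousOn.log (continuous_const.mul Real.continuous_sin).continuousOn
  intro t ht
  have := Real.sin_pos_of_pos_of_lt_pi ht.1 ht.2
  exact mul_ne_zero two_ne_zero this.ne'

/-- Integrability of the integrand over `[0, 1/4]`, despite the singularity at `0`. -/
lemma logSin_intervalIntegrable_small :
    IntervalIntegrable (fun t => Real.log (2 * Real.sin t)) volume 0 4⁻¹ := by
  have h14 : (0:ℝ) ≤ 4⁻¹ := by norm_num
  have hdom : IntervalIntegrable (fun t : ℝ => 2 * t ^ (-(1:ℝ)/2)) volume 0 4⁻¹ :=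
    (intervalIntegral.intervalIntegrable_rpow' (by norm_num)).const_mul 2
  rw [intervalIntegrable_iff, uIoc_of_le h14] at hdom ⊢
  refine hdom.mono' ?_ ?_
  · refine ContinuousOn.aestronglyMeasurable ?_ measurableSet_Ioc
    refine logSin_continuousOn.mono (fun t ht => ?_)
    exact ⟨ht.1, lt_of_le_of_lt ht.2 (by nlinarith [Real.pi_gt_three])⟩
  · filter_upwards [ae_restrict_mem measurableSet_Ioc] with t ht
    obtain ⟨ht0, ht4⟩ := ht
    have hπ := Real.pi_pos
    have hπ4 := Real.pi_le_four
    have h3 := Real.pi_gt_three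
    have htle : t ≤ Real.pi / 2 := by linarith
    have hsin_lt : Real.sin t < t := Real.sin_lt ht0
    have hsin_ge : 2 / Real.pi * t ≤ Real.sin t := Real.mul_le_sin ht0.le htle
    have hhalf : (1:ℝ)/2 ≤ 2 / Real.pi := by
      rw [div_le_div_iff₀ (by norm_num) hπ]; linarith
    have hlow : t ≤ 2 * Real.sin t := by
      nlinarith [mul_le_mul_of_nonneg_right hhalf ht0.le]
    have hpos : 0 < 2 * Real.sin t := lt_of_lt_of_le ht0 hlow
    have hub : 2 * Real.sin t ≤ 1 := by nlinarith
    have hlog_le : Real.log (2 * Real.sin t) ≤ 0 := Real.log_nonpos hpos.le hub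
    have hmono : Real.log t ≤ Real.log (2 * Real.sin t) := Real.log_le_log ht0 hlow
    have hrpos : 0 < t ^ (-(1:ℝ)/2) := Real.rpow_pos_of_pos ht0 _
    have hlogr : Real.log (t ^ (-(1:ℝ)/2)) = (-(1:ℝ)/2) * Real.log t := Real.log_rpow ht0 _
    have hle : Real.log (t ^ (-(1:ℝ)/2)) ≤ t ^ (-(1:ℝ)/2) - 1 :=
      Real.log_le_sub_one_of_pos hrpos
    have hbound : -Real.log t ≤ 2 * t ^ (-(1:ℝ)/2) := by
      have : (-(1:ℝ)/2) * Real.log t ≤ t ^ (-(1:ℝ)/2) - 1 := hlogr ▸ hle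
      linarith
    rw [Real.norm_eq_abs, abs_of_nonpos hlog_le]
    calc -Real.log (2 * Real.sin t) ≤ -Real.log t := by linarith
    _ ≤ 2 * t ^ (-(1:ℝ)/2) := hbound

lemma quarter_mem : (4:ℝ)⁻¹ ∈ Ioo 0 Real.pi :=
  ⟨by norm_num, by nlinarith [Real.pi_gt_three]⟩

lemma logSin_intervalIntegrable {y : ℝ} (hy : y ∈ Ioo 0 Real.pi) :
    IntervalIntegrable (fun t => Real.log (2 * Real.sin t)) volume 0 y := by
  refine logSin_intervalIntegrable_small.trans ?_
  refine (logSin_continuousOn.mono ?_).intervalIntegrable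
  exact Set.OrdConnected.uIcc_subset Set.ordConnected_Ioo quarter_mem hy

/-- Derivative of the Lobachevsky function on `(0, π)`. -/
lemma lobachevsky_hasDerivAt {x : ℝ} (hx : x ∈ Ioo 0 Real.pi) :
    HasDerivAt lobachevsky (-Real.log (2 * Real.sin x)) x := by
  set g := fun t => Real.log (2 * Real.sin t) with hg
  have hmid : IntervalIntegrable g volume 4⁻¹ x :=
    (logSin_continuousOn.mono
      (Set.OrdConnected.uIcc_subset Set.ordConnected_Ioo quarter_mem hx)).intervalIntegrable
  have hF : HasDerivAt (fun u => ∫ t in (4⁻¹:ℝ)..u, g t) (g x) x :=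
    intervalIntegral.integral_hasDerivAt_right hmid
      (ContinuousOn.stronglyMeasurableAtFilter isOpen_Ioo logSin_continuousOn x hx)
      (logSin_continuousOn.continuousAt (isOpen_Ioo.mem_nhds hx))
  have hF' : HasDerivAt (fun u => -(∫ t in (0:ℝ)..4⁻¹, g t) - ∫ t in (4⁻¹:ℝ)..u, g t)
      (-(g x)) x := hF.const_sub _
  refine hF'.congr_of_eventuallyEq ?_
  filter_upwards [isOpen_Ioo.mem_nhds hx] with y hy
  have hadd := intervalIntegral.integral_add_adjacent_intervals
    logSin_intervalIntegrable_small
    ((logSin_continuousOn.mono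
      (Set.OrdConnected.uIcc_subset Set.ordConnected_Ioo quarter_mem hy)).intervalIntegrable)
  show lobachevsky y = _
  rw [lobachevsky, ← hadd]
  ring

/-- Derivative of the edge contribution on `(0, π)`. -/
lemma edge_hasDerivAt {x : ℝ} (hx : x ∈ Ioo 0 Real.pi) :
    HasDerivAt edgeContribution (x * Real.cos x / (Real.pi * Real.sin x)) x := by
  have hs : 0 < Real.sin x := Real.sin_pos_of_pos_of_lt_pi hx.1 hx.2
  have h2s : (2:ℝ) * Real.sin x ≠ 0 := by positivity
  have hπ : Real.pi ≠ 0 := Real.pi_ne_zero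
  have hlog : HasDerivAt (fun y => Real.log (2 * Real.sin y))
      (2 * Real.cos x / (2 * Real.sin x)) x :=
    ((Real.hasDerivAt_sin x).const_mul 2).log h2s
  have h1 := ((hasDerivAt_id x).div_const Real.pi).mul hlog
  have h2 := (lobachevsky_hasDerivAt hx).div_const Real.pi
  have h := h1.add h2
  have : edgeContribution = fun y =>
      y / Real.pi * Real.log (2 * Real.sin y) + lobachevsky y / Real.pi := rfl
  rw [this]
  convert h using 1
  · rfl
  · rfl
  · rfl
  have hsne : Real.sin x ≠ 0 := ne_of_gt hs
  field_simp
  simp only [id_eq]; ring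

/-- Auxiliary: the derivative of `mIsoF0` on `(0, π/2)`. -/
noncomputable def mIsoDeriv (x : ℝ) : ℝ :=
  4 * (x * Real.cos x / (Real.pi * Real.sin x)) -
    4 * ((Real.pi / 2 - x) * Real.cos (Real.pi / 2 - x) /
      (Real.pi * Real.sin (Real.pi / 2 - x)))

lemma mIso_hasDerivAt {x : ℝ} (hx : x ∈ Ioo 0 (Real.pi / 2)) :
    HasDerivAt mIsoF0 (mIsoDeriv x) x := by
  have hπ := Real.pi_pos
  have hx1 : x ∈ Ioo 0 Real.pi := ⟨hx.1, by linarith [hx.2]⟩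
  have hx2 : Real.pi / 2 - x ∈ Ioo 0 Real.pi := ⟨by linarith [hx.2], by linarith [hx.1]⟩
  have hinner : HasDerivAt (fun y : ℝ => Real.pi / 2 - y) (-1) x := by
    simpa using (hasDerivAt_id x).const_sub (Real.pi / 2)
  have hcomp := (edge_hasDerivAt hx2).comp x hinner
  have h := ((edge_hasDerivAt hx1).const_mul 4).add (hcomp.const_mul 4)
  have : mIsoF0 = fun y =>
      4 * edgeContribution y + 4 * edgeContribution (Real.pi / 2 - y) := rfl
  rw [this]
  convert h using 1
  · rfl
  · rfl
  · rfl
  unfold mIsoDeriv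
  ring

lemma pi_div_four_mem : Real.pi / 4 ∈ Ioo 0 (Real.pi / 2) :=
  ⟨by positivity, by linarith [Real.pi_pos]⟩

lemma pi_half_sub_quarter : Real.pi / 2 - Real.pi / 4 = Real.pi / 4 := by ring

/-- Second derivative computation. -/
lemma mIsoDeriv_hasDerivAt :
    HasDerivAt mIsoDeriv (8 / Real.pi - 4) (Real.pi / 4) := by
  have hπ := Real.pi_pos
  have hπ' : Real.pi ≠ 0 := Real.pi_ne_zero
  have hs2 : Real.sqrt 2 ≠ 0 := by positivity
  have hsin : Real.sin (Real.pi / 4) = Real.sqrt 2 / 2 := Real.sin_pi_div_four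
  have hsne : Real.sin (Real.pi / 4) ≠ 0 := by rw [hsin]; positivity
  have hden : Real.pi * Real.sin (Real.pi / 4) ≠ 0 := mul_ne_zero hπ' hsne
  have hq : ∀ p : ℝ, Real.sin p ≠ 0 →
      HasDerivAt (fun x => x * Real.cos x / (Real.pi * Real.sin x))
        (((1 * Real.cos p + p * (-Real.sin p)) * (Real.pi * Real.sin p) -
          p * Real.cos p * (Real.pi * Real.cos p)) / (Real.pi * Real.sin p) ^ 2) p := by
    intro p hp
    exact ((hasDerivAt_id p).mul (Real.hasDerivAt_cos p)).div
      ((Real.hasDerivAt_sin p).const_mul Real.pi) (mul_ne_zero hπ' hp)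
  have hinner : HasDerivAt (fun y : ℝ => Real.pi / 2 - y) (-1) (Real.pi / 4) := by
    simpa using (hasDerivAt_id (Real.pi / 4)).const_sub (Real.pi / 2)
  have hsne' : Real.sin (Real.pi / 2 - Real.pi / 4) ≠ 0 := by rw [pi_half_sub_quarter]; exact hsne
  have hcomp := (hq _ hsne').comp (Real.pi / 4) hinner
  have h := ((hq _ hsne).const_mul 4).sub (hcomp.const_mul 4)
  have hfun : mIsoDeriv = fun x =>
      4 * (x * Real.cos x / (Real.pi * Real.sin x)) -
        4 * ((fun z => z * Real.cos z / (Real.pi * Real.sin z)) (Real.pi / 2 - x)) := rfl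
  rw [hfun]
  convert h using 1
  · rfl
  · rfl
  · rfl
  rw [pi_half_sub_quarter, hsin, Real.cos_pi_div_four]
  have h2 : Real.sqrt 2 * Real.sqrt 2 = 2 := Real.mul_self_sqrt (by norm_num)
  field_simp
  ring_nf

/-- `m_iso` has a critical point at `θ₁ = π/4`, with second derivative
`8/π − 4 < 0` there; hence `π/4` is a strict local maximum. -/
theorem mIsoF0_max_at_pi_div_four :
    HasDerivAt mIsoF0 0 (Real.pi / 4) ∧
    HasDerivAt (deriv mIsoF0) (8 / Real.pi - 4) (Real.pi / 4) ∧
    (8 / Real.pi - 4 < 0) ∧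
    (∀ᶠ θ in nhdsWithin (Real.pi / 4) {Real.pi / 4}ᶜ,
      mIsoF0 θ < mIsoF0 (Real.pi / 4)) := by
  have hπ := Real.pi_pos
  have hmem := pi_div_four_mem
  have hval0 : mIsoDeriv (Real.pi / 4) = 0 := by
    unfold mIsoDeriv; rw [pi_half_sub_quarter]; ring
  have hfirst : HasDerivAt mIsoF0 0 (Real.pi / 4) := hval0 ▸ mIso_hasDerivAt hmem
  have heq : deriv mIsoF0 =ᶠ[nhds (Real.pi / 4)] mIsoDeriv := by
    filter_upwards [isOpen_Ioo.mem_nhds hmem] with y hy using (mIso_hasDerivAt hy).deriv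
  have hsecond : HasDerivAt (deriv mIsoF0) (8 / Real.pi - 4) (Real.pi / 4) :=
    mIsoDeriv_hasDerivAt.congr_of_eventuallyEq heq
  have hneg : 8 / Real.pi - 4 < 0 := by
    rw [sub_neg, div_lt_iff₀ hπ]
    nlinarith [Real.pi_gt_three]
  refine ⟨hfirst, hsecond, hneg, ?_⟩
  -- strict local max
  set D := deriv mIsoF0 with hD
  have hD0 : D (Real.pi / 4) = 0 := hfirst.deriv
  have hslope : Tendsto (slope D (Real.pi / 4)) (𝓝[≠] (Real.pi / 4)) (𝓝 (8 / Real.pi - 4)) :=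
    hasDerivAt_iff_tendsto_slope.mp hsecond
  have hev : ∀ᶠ y in 𝓝[≠] (Real.pi / 4),
      slope D (Real.pi / 4) y < 0 ∧ y ∈ Ioo 0 (Real.pi / 2) := by
    filter_upwards [hslope.eventually_lt_const hneg,
      mem_nhdsWithin_of_mem_nhds (isOpen_Ioo.mem_nhds hmem)] with y h1 h2
    exact ⟨h1, h2⟩
  obtain ⟨ε, hε0, hball⟩ := Metric.mem_nhdsWithin_iff.1 hev
  have hsign : ∀ z, z ∈ Metric.ball (Real.pi / 4) ε → z ≠ Real.pi / 4 →
      D z / (z - Real.pi / 4) < 0 ∧ z ∈ Ioo 0 (Real.pi / 2) := by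
    intro z hz hz'
    have := hball ⟨hz, hz'⟩
    simp only [Set.mem_setOf_eq] at this
    rwa [slope_def_field, hD0, sub_zero] at this
  have hkey : ∀ y ∈ Metric.ball (Real.pi / 4) ε, y ≠ Real.pi / 4 →
      mIsoF0 y < mIsoF0 (Real.pi / 4) := by
    intro y hy hyne
    have hyIoo := (hsign y hy hyne).2
    have hIcc_sub : ∀ a b : ℝ, a ∈ Ioo 0 (Real.pi / 2) → b ∈ Ioo 0 (Real.pi / 2) →
        Icc a b ⊆ Ioo 0 (Real.pi / 2) := fun a b ha hb =>
      Set.OrdConnected.out Set.ordConnected_Ioo ha hb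
    rcases lt_or_gt_of_ne hyne with hlt | hgt
    · -- y < π/4 : mIsoF0 strictly increasing on [y, π/4]
      have hsub : Icc y (Real.pi / 4) ⊆ Ioo 0 (Real.pi / 2) := hIcc_sub _ _ hyIoo hmem
      have hmono : StrictMonoOn mIsoF0 (Icc y (Real.pi / 4)) := by
        refine strictMonoOn_of_deriv_pos (convex_Icc _ _) ?_ ?_
        · exact fun z hz => (mIso_hasDerivAt (hsub hz)).differentiableAt.continuousAt.continuousWithinAt
        · intro z hz
          rw [interior_Icc] at hz
          have hzball : z ∈ Metric.ball (Real.pi / 4) ε := by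
            rw [Real.ball_eq_Ioo] at hy ⊢
            exact ⟨lt_trans hy.1 hz.1, lt_trans hz.2 (by linarith [hε0])⟩
          have hzne : z ≠ Real.pi / 4 := ne_of_lt hz.2
          have h1 := (hsign z hzball hzne).1
          have hzlt : z - Real.pi / 4 < 0 := by linarith [hz.2]
          rcases div_neg_iff.mp h1 with ⟨h, _⟩ | ⟨h, _⟩
          · exact h
          · linarith
      exact hmono ⟨le_refl y, hlt.le⟩ ⟨hlt.le, le_refl _⟩ hlt
    · -- y > π/4 : mIsoF0 strictly decreasing on [π/4, y]
      have hsub : Icc (Real.pi / 4) y ⊆ Ioo 0 (Real.pi / 2) := hIcc_sub _ _ hmem hyIoo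
      have hanti : StrictAntiOn mIsoF0 (Icc (Real.pi / 4) y) := by
        refine strictAntiOn_of_deriv_neg (convex_Icc _ _) ?_ ?_
        · exact fun z hz => (mIso_hasDerivAt (hsub hz)).differentiableAt.continuousAt.continuousWithinAt
        · intro z hz
          rw [interior_Icc] at hz
          have hzball : z ∈ Metric.ball (Real.pi / 4) ε := by
            rw [Real.ball_eq_Ioo] at hy ⊢
            exact ⟨lt_trans (by linarith [hε0]) hz.1, lt_trans hz.2 hy.2⟩
          have hzne : z ≠ Real.pi / 4 := ne_of_gt hz.1
          have h1 := (hsign z hzball hzne).1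
          have hzgt : 0 < z - Real.pi / 4 := by linarith [hz.1]
          rcases div_neg_iff.mp h1 with ⟨_, h⟩ | ⟨h, _⟩
          · linarith
          · exact h
      exact hanti ⟨le_refl _, hgt.le⟩ ⟨hgt.le, le_refl y⟩ hgt
  filter_upwards [mem_nhdsWithin_of_mem_nhds (Metric.ball_mem_nhds _ hε0),
    self_mem_nhdsWithin] with y hy hy'
  exact hkey y hy hy'
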